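/- Let q be a prime power, F_q the finite field with q elements, and 1 ≤ t ≤ ℓ ≤ m integers. Let F ∈ Mat_{ℓ×m} be a matrix of rank r. Then #{M ∈ Mat_{ℓ×m} : rank M ≤ t and ⟨F,M⟩ ≠ 0} = #{M ∈ Mat_{ℓ×m} : rank M ≤ t and τ_r(M) ≠ 0}; that is, the Hamming weight of the determinantal codeword associated to F depends only on the rank of F and equals the weight of the codeword of the r-th partial trace. -/

import Mathlib

open Finset Matrix Module

/-- The `r`-th partial trace `τ_r(M) = Σ_{i=1}^r M_{ii}`. -/
def ptrace {K : Type} [Field K] {a b : ℕ} (r : ℕ) (M : Matrix (Fin a) (Fin b) K) : K :=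
  ∑ i ∈ Finset.range r, if h : i < a ∧ i < b then M ⟨i, h.1⟩ ⟨i, h.2⟩ else 0

lemma rank_normal_form {K : Type} [Field K] {l m r : ℕ}
    (F : Matrix (Fin l) (Fin m) K) (hF : F.rank = r) :
    ∃ (P P' : Matrix (Fin l) (Fin l) K) (Q Q' : Matrix (Fin m) (Fin m) K),
      P * P' = 1 ∧ P' * P = 1 ∧ Q * Q' = 1 ∧ Q' * Q = 1 ∧
      F = P * (Matrix.of fun (i : Fin l) (j : Fin m) =>
        if ((i : ℕ) = (j : ℕ) ∧ (j : ℕ) < r) then (1:K) else 0) * Q := by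
  classical
  set f := F.mulVecLin with hf
  have hrange : finrank K (LinearMap.range f) = r := hF
  have hrm : r ≤ m := by
    rw [← hF]; exact (F.rank_le_card_width).trans (by simp)
  have hrl : r ≤ l := by
    rw [← hF]; exact (F.rank_le_card_height).trans (by simp)
  have hkerdim : finrank K (LinearMap.ker f) = m - r := by
    have := LinearMap.finrank_range_add_finrank_ker f
    rw [hrange, Module.finrank_fin_fun] at this
    omega
  obtain ⟨C, hC⟩ := Submodule.exists_isCompl (LinearMap.ker f)
  obtain ⟨D, hD⟩ := Submodule.exists_isCompl (LinearMap.range f)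
  have hCdim : finrank K C = r := by
    have := Submodule.finrank_add_eq_of_isCompl hC
    rw [hkerdim, Module.finrank_fin_fun] at this; omega
  have hDdim : finrank K D = l - r := by
    have := Submodule.finrank_add_eq_of_isCompl hD
    rw [hrange, Module.finrank_fin_fun] at this; omega
  let bC : Basis (Fin r) K C := Module.finBasisOfFinrankEq K C hCdim
  let bN : Basis (Fin (m - r)) K (LinearMap.ker f) :=
    Module.finBasisOfFinrankEq K _ hkerdim
  let bD : Basis (Fin (l - r)) K D := Module.finBasisOfFinrankEq K D hDdim
  -- the equivalence C ≃ range f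
  let g : C →ₗ[K] LinearMap.range f :=
    (f.domRestrict C).codRestrict _ (fun c => LinearMap.mem_range_self _ _)
  have hginj : Function.Injective g := by
    intro x y hxy
    have hker : (↑x - ↑y : Fin m → K) ∈ LinearMap.ker f := by
      simp only [LinearMap.mem_ker, map_sub]
      have : f x = f y := congrArg Subtype.val hxy
      simpa [sub_eq_zero] using this
    have hmem : (↑x - ↑y : Fin m → K) ∈ C := sub_mem x.2 y.2
    have := hC.disjoint.le_bot ⟨hker, hmem⟩
    ext1
    simpa [sub_eq_zero] using this
  have hgsurj : Function.Surjective g := by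
    rintro ⟨y, x, rfl⟩
    obtain ⟨⟨k, c⟩, hkc⟩ := (Submodule.prodEquivOfIsCompl _ _ hC).surjective x
    rw [Submodule.coe_prodEquivOfIsCompl'] at hkc
    refine ⟨c, ?_⟩
    ext
    simp only [g, LinearMap.codRestrict_apply, LinearMap.domRestrict_apply]
    rw [← hkc, map_add]
    simp [g, LinearMap.mem_ker.mp k.2]
    rfl
  let eC : C ≃ₗ[K] LinearMap.range f := LinearEquiv.ofBijective g ⟨hginj, hgsurj⟩
  let bR : Basis (Fin r) K (LinearMap.range f) := bC.map eC
  let em' : Fin r ⊕ Fin (m - r) ≃ Fin m :=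
    finSumFinEquiv.trans (finCongr (by omega))
  let el' : Fin r ⊕ Fin (l - r) ≃ Fin l :=
    finSumFinEquiv.trans (finCongr (by omega))
  let bm : Basis (Fin m) K (Fin m → K) :=
    (((bC.prod bN).map (Submodule.prodEquivOfIsCompl _ _ hC.symm)).reindex em')
  let bl : Basis (Fin l) K (Fin l → K) :=
    (((bR.prod bD).map (Submodule.prodEquivOfIsCompl _ _ hD)).reindex el')
  -- values of bm
  have hbm_lt : ∀ (j : Fin m) (hj : (j : ℕ) < r), bm j = (bC ⟨j, hj⟩ : Fin m → K) := by
    intro j hj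
    have h2 : Fin.cast (by omega : m = r + (m - r)) j
        = Fin.castAdd (m - r) (⟨j, hj⟩ : Fin r) := by ext; simp
    have hsymm : em'.symm j = Sum.inl ⟨j, hj⟩ := by
      simp only [em', Equiv.symm_trans_apply, finCongr_symm, finCongr_apply]
      rw [h2, finSumFinEquiv_symm_apply_castAdd]
    simp [bm, Basis.reindex_apply, hsymm, Submodule.coe_prodEquivOfIsCompl']
  have hbm_ge : ∀ (j : Fin m), r ≤ (j : ℕ) → bm j ∈ LinearMap.ker f := by
    intro j hj
    have hj2 : (j : ℕ) - r < m - r := by omega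
    have h2 : Fin.cast (by omega : m = r + (m - r)) j
        = Fin.natAdd r (⟨(j : ℕ) - r, hj2⟩ : Fin (m - r)) := by
      ext; simp; omega
    have hsymm : em'.symm j = Sum.inr ⟨(j : ℕ) - r, hj2⟩ := by
      simp only [em', Equiv.symm_trans_apply, finCongr_symm, finCongr_apply]
      rw [h2, finSumFinEquiv_symm_apply_natAdd]
    simp only [bm, Basis.reindex_apply, hsymm, Basis.map_apply]
    rw [Basis.prod_apply]
    simp [Submodule.coe_prodEquivOfIsCompl']
  have hbl_lt : ∀ (i : Fin l) (hi : (i : ℕ) < r), bl i = (bR ⟨i, hi⟩ : Fin l → K) := by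
    intro i hi
    have h2 : Fin.cast (by omega : l = r + (l - r)) i
        = Fin.castAdd (l - r) (⟨i, hi⟩ : Fin r) := by ext; simp
    have hsymm : el'.symm i = Sum.inl ⟨i, hi⟩ := by
      simp only [el', Equiv.symm_trans_apply, finCongr_symm, finCongr_apply]
      rw [h2, finSumFinEquiv_symm_apply_castAdd]
    simp [bl, Basis.reindex_apply, hsymm, Submodule.coe_prodEquivOfIsCompl']
  -- f maps bm j to bl j for j < r, and to 0 otherwise
  have hfb : ∀ (j : Fin m), f (bm j) =
      if hj : (j : ℕ) < r then bl ⟨j, lt_of_lt_of_le hj hrl⟩ else 0 := by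
    intro j
    by_cases hj : (j : ℕ) < r
    · rw [dif_pos hj, hbm_lt j hj, hbl_lt _ hj]
      have : (bR ⟨j, hj⟩ : Fin l → K) = f (bC ⟨j, hj⟩ : Fin m → K) := by
        simp only [bR, Basis.map_apply]
        rfl
      rw [this]
    · rw [dif_neg hj]
      exact hbm_ge j (le_of_not_gt hj)
  -- the matrix of f w.r.t. bm, bl
  have htm : LinearMap.toMatrix bm bl f = Matrix.of fun (i : Fin l) (j : Fin m) =>
      if ((i : ℕ) = (j : ℕ) ∧ (j : ℕ) < r) then (1:K) else 0 := by
    ext i j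
    rw [LinearMap.toMatrix_apply, hfb j]
    by_cases hj : (j : ℕ) < r
    · rw [dif_pos hj]
      simp only [Basis.repr_self, Matrix.of_apply]
      rw [Finsupp.single_apply]
      by_cases hij : (i : ℕ) = (j : ℕ)
      · have hji : (⟨(j : ℕ), lt_of_lt_of_le hj hrl⟩ : Fin l) = i := by
          ext; exact hij.symm
        rw [if_pos hji, if_pos ⟨hij, hj⟩]
      · have hji : ¬((⟨(j : ℕ), lt_of_lt_of_le hj hrl⟩ : Fin l) = i) := by
          intro h
          exact hij (by rw [← h])
        rw [if_neg hji, if_neg (by tauto)]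
    · rw [dif_neg hj]
      simp [hj]
  -- change of basis
  let sbm : Basis (Fin m) K (Fin m → K) := Pi.basisFun K (Fin m)
  let sbl : Basis (Fin l) K (Fin l → K) := Pi.basisFun K (Fin l)
  have hFf : LinearMap.toMatrix sbm sbl f = F := by
    have : f = Matrix.toLin sbm sbl F := by
      rw [Matrix.toLin_eq_toLin']; rfl
    rw [this, LinearMap.toMatrix_toLin]
  refine ⟨LinearMap.toMatrix bl sbl LinearMap.id, LinearMap.toMatrix sbl bl LinearMap.id,
    LinearMap.toMatrix sbm bm LinearMap.id, LinearMap.toMatrix bm sbm LinearMap.id,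
    ?_, ?_, ?_, ?_, ?_⟩
  · rw [← LinearMap.toMatrix_comp sbl bl sbl, LinearMap.id_comp, LinearMap.toMatrix_id]
  · rw [← LinearMap.toMatrix_comp bl sbl bl, LinearMap.id_comp, LinearMap.toMatrix_id]
  · rw [← LinearMap.toMatrix_comp bm sbm bm, LinearMap.id_comp, LinearMap.toMatrix_id]
  · rw [← LinearMap.toMatrix_comp sbm bm sbm, LinearMap.id_comp, LinearMap.toMatrix_id]
  · rw [← htm, Matrix.mul_assoc, ← LinearMap.toMatrix_comp sbm bm bl f LinearMap.id,
      ← LinearMap.toMatrix_comp sbm bl sbl LinearMap.id (f ∘ₗ LinearMap.id),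
      LinearMap.id_comp, LinearMap.comp_id, hFf]

theorem stmt_1 (q t l m r : ℕ) (hq : IsPrimePow q)
    (K : Type) [Field K] [Fintype K] (hK : Fintype.card K = q)
    (ht : 1 ≤ t) (htl : t ≤ l) (hlm : l ≤ m)
    (F : Matrix (Fin l) (Fin m) K) (hF : F.rank = r) :
    Nat.card {M : Matrix (Fin l) (Fin m) K //
        M.rank ≤ t ∧ Matrix.trace (F * Mᵀ) ≠ 0} =
      Nat.card {M : Matrix (Fin l) (Fin m) K //
        M.rank ≤ t ∧ ptrace r M ≠ 0} := by
  classical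
  obtain ⟨P, P', Q, Q', hPP', hP'P, hQQ', hQ'Q, hFPEQ⟩ := rank_normal_form F hF
  set E : Matrix (Fin l) (Fin m) K := Matrix.of fun (i : Fin l) (j : Fin m) =>
    if ((i : ℕ) = (j : ℕ) ∧ (j : ℕ) < r) then (1:K) else 0 with hE
  have hrl : r ≤ l := by
    rw [← hF]; exact F.rank_le_card_height.trans (by simp)
  -- trace of E * Mᵀ is the partial trace
  have hptr : ∀ M : Matrix (Fin l) (Fin m) K, Matrix.trace (E * Mᵀ) = ptrace r M := by
    intro M
    set g : ℕ → K := fun n =>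
      if h : n < r ∧ n < l ∧ n < m then M ⟨n, h.2.1⟩ ⟨n, h.2.2⟩ else 0 with hg
    have step1 : ∀ i : Fin l, (E * Mᵀ).diag i = g (i : ℕ) := by
      intro i
      have him : (i : ℕ) < m := lt_of_lt_of_le i.2 hlm
      rw [Matrix.diag_apply, Matrix.mul_apply]
      rw [Finset.sum_eq_single (⟨(i : ℕ), him⟩ : Fin m)]
      · by_cases hi : (i : ℕ) < r
        · have hE1 : E i ⟨(i : ℕ), him⟩ = 1 := by simp [hE, hi]
          rw [hE1, one_mul, Matrix.transpose_apply]
          simp only [hg]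
          rw [dif_pos ⟨hi, i.2, him⟩]
        · have hE0 : E i ⟨(i : ℕ), him⟩ = 0 := by simp [hE, hi]
          rw [hE0, zero_mul]
          simp only [hg]
          rw [dif_neg (fun h : _ ∧ _ => hi h.1)]
      · intro b _ hb
        have hE0 : E i b = 0 := by
          simp only [hE, Matrix.of_apply, ite_eq_right_iff, and_imp]
          intro h1 h2
          exact absurd (Fin.ext h1.symm) hb
        rw [hE0, zero_mul]
      · intro h; exact absurd (Finset.mem_univ _) h
    rw [Matrix.trace]
    rw [Finset.sum_congr rfl (fun i _ => step1 i)]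
    rw [Fin.sum_univ_eq_sum_range g l]
    have hsub : ∑ i ∈ Finset.range l, g i = ∑ i ∈ Finset.range r, g i := by
      refine (Finset.sum_subset (Finset.range_subset_range.mpr hrl) ?_).symm
      intro x _ hxr
      have hx : ¬ x < r := by simpa using hxr
      simp only [hg]
      exact dif_neg (fun h : _ ∧ _ => hx h.1)
    rw [hsub, ptrace]
    refine Finset.sum_congr rfl fun i hi => ?_
    have hir : i < r := Finset.mem_range.mp hi
    have h1 : i < l := lt_of_lt_of_le hir hrl
    have h2 : i < m := lt_of_lt_of_le h1 hlm
    simp only [hg]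
    rw [dif_pos ⟨hir, h1, h2⟩, dif_pos ⟨h1, h2⟩]
  -- determinants are units
  have hdPt : IsUnit Pᵀ.det := by
    refine IsUnit.of_mul_eq_one P'ᵀ.det ?_
    rw [← Matrix.det_mul, ← Matrix.transpose_mul, hP'P, Matrix.transpose_one, Matrix.det_one]
  have hdP't : IsUnit P'ᵀ.det := by
    refine IsUnit.of_mul_eq_one Pᵀ.det ?_
    rw [← Matrix.det_mul, ← Matrix.transpose_mul, hPP', Matrix.transpose_one, Matrix.det_one]
  have hdQt : IsUnit Qᵀ.det := by
    refine IsUnit.of_mul_eq_one Q'ᵀ.det ?_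
    rw [← Matrix.det_mul, ← Matrix.transpose_mul, hQ'Q, Matrix.transpose_one, Matrix.det_one]
  have hdQ't : IsUnit Q'ᵀ.det := by
    refine IsUnit.of_mul_eq_one Qᵀ.det ?_
    rw [← Matrix.det_mul, ← Matrix.transpose_mul, hQQ', Matrix.transpose_one, Matrix.det_one]
  -- rank is preserved
  have hrk : ∀ (A : Matrix (Fin l) (Fin l) K) (B : Matrix (Fin m) (Fin m) K)
      (M : Matrix (Fin l) (Fin m) K), IsUnit A.det → IsUnit B.det →
      (A * M * B).rank = M.rank := by
    intro A B M hA hB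
    rw [Matrix.rank_mul_eq_left_of_isUnit_det B (A * M) hB,
      Matrix.rank_mul_eq_right_of_isUnit_det A M hA]
  -- cancellation
  have hcancel : ∀ (A A' : Matrix (Fin l) (Fin l) K) (B B' : Matrix (Fin m) (Fin m) K)
      (M : Matrix (Fin l) (Fin m) K), A * A' = 1 → B' * B = 1 →
      A * (A' * M * B') * B = M := by
    intro A A' B B' M h1 h2
    have : A * (A' * M * B') * B = A * A' * (M * (B' * B)) := by
      simp only [Matrix.mul_assoc]
    rw [this, h1, h2, Matrix.one_mul, Matrix.mul_one]
  have hPtP't : P'ᵀ * Pᵀ = 1 := by rw [← Matrix.transpose_mul, hPP', Matrix.transpose_one]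
  have hP'tPt : Pᵀ * P'ᵀ = 1 := by rw [← Matrix.transpose_mul, hP'P, Matrix.transpose_one]
  have hQtQ't : Qᵀ * Q'ᵀ = 1 := by rw [← Matrix.transpose_mul, hQ'Q, Matrix.transpose_one]
  have hQ'tQt : Q'ᵀ * Qᵀ = 1 := by rw [← Matrix.transpose_mul, hQQ', Matrix.transpose_one]
  -- trace identity
  have htr : ∀ M : Matrix (Fin l) (Fin m) K,
      Matrix.trace (F * Mᵀ) = Matrix.trace (E * (Pᵀ * M * Qᵀ)ᵀ) := by
    intro M
    rw [hFPEQ]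
    have h1 : (Pᵀ * M * Qᵀ)ᵀ = Q * Mᵀ * P := by
      simp [Matrix.transpose_mul, Matrix.mul_assoc]
    have h2 : P * E * Q * Mᵀ = P * (E * Q * Mᵀ) := by simp [Matrix.mul_assoc]
    have h3 : E * (Q * Mᵀ * P) = (E * Q * Mᵀ) * P := by simp [Matrix.mul_assoc]
    rw [h1, h2, h3, Matrix.trace_mul_comm]
  refine Nat.card_congr ⟨fun M => ⟨Pᵀ * M.1 * Qᵀ, ?_, ?_⟩,
    fun N => ⟨P'ᵀ * N.1 * Q'ᵀ, ?_, ?_⟩, ?_, ?_⟩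
  · rw [hrk _ _ _ hdPt hdQt]; exact M.2.1
  · rw [← hptr, ← htr]; exact M.2.2
  · rw [hrk _ _ _ hdP't hdQ't]; exact N.2.1
  · rw [htr, hcancel _ _ _ _ _ hP'tPt hQ'tQt, hptr]; exact N.2.2
  · intro M
    ext1
    exact hcancel _ _ _ _ _ hPtP't hQtQ't
  · intro N
    ext1
    exact hcancel _ _ _ _ _ hP'tPt hQ'tQt
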